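/- arXiv:1612.05207 — 3 statements merged into one kernel-verified Lean document; each statement's English description precedes it below -/
import Mathlib

section
/- With the recursions Uₙ = (1/n) Σ_{k=0}^{n−1} U_k L_{G_{n−k−1}} (U₀ = 1), the non-recursive Cary formula holds: Uₙ = Σ over all strictly decreasing integer sequences n > m₁ > m₂ > ⋯ > m_r > 0 (including the empty sequence r = 0) of the product (L_{G_{m_r − 1}}/m_r) ⋯ (L_{G_{m₁−m₂−1}}/m₁) (L_{G_{n−m₁−1}}/n). -/
open Finset

/-- The term of the Cary formula associated to the outer index `n` and the
strictly decreasing sequence `[m₁, m₂, …, m_r]` (listed with `m₁` largest):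
`caryTerm L n [m₁, …, m_r] = (L_{G_{m_r−1}}/m_r) ⋯ (L_{G_{m₁−m₂−1}}/m₁) (L_{G_{n−m₁−1}}/n)`,
defined recursively by `caryTerm L n [] = L_{G_{n−1}}/n` and
`caryTerm L n (m₁ :: ms) = caryTerm L m₁ ms * (L_{G_{n−m₁−1}}/n)`. -/
def caryTerm {R : Type*} [Ring R] [Algebra ℚ R] (L : ℕ → R) : ℕ → List ℕ → R
  | n, [] => (n : ℚ)⁻¹ • L (n - 1)
  | n, (m :: ms) => caryTerm L m ms * ((n : ℚ)⁻¹ • L (n - m - 1))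

/-- Decomposition of a sum over subsets of `Ioo 0 n` according to the maximal element. -/
lemma powerset_Ioo_sum {M : Type*} [AddCommMonoid M] (n : ℕ) (F : Finset ℕ → M) :
    ∑ s ∈ (Finset.Ioo 0 n).powerset, F s =
      F ∅ + ∑ k ∈ Finset.Ioo 0 n, ∑ t ∈ (Finset.Ioo 0 k).powerset, F (insert k t) := by
  classical
  rw [← Finset.sum_filter_add_sum_filter_not ((Ioo 0 n).powerset) (· = ∅)]
  congr 1
  · have h : (Ioo 0 n).powerset.filter (· = ∅) = {∅} := by
      ext s
      simp only [mem_filter, mem_powerset, mem_singleton]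
      exact ⟨fun ⟨_, h⟩ => h, fun h => ⟨h ▸ empty_subset _, h⟩⟩
    rw [h, sum_singleton]
  · rw [Finset.sum_sigma']
    have hne : ∀ s ∈ (Ioo 0 n).powerset.filter (¬ · = ∅), s.Nonempty := by
      intro s hs
      exact Finset.nonempty_iff_ne_empty.mpr (Finset.mem_filter.mp hs).2
    refine Finset.sum_bij'
      (fun s hs => ⟨s.max' (hne s hs), s.erase (s.max' (hne s hs))⟩)
      (fun p _ => insert p.1 p.2) ?_ ?_ ?_ ?_ ?_
    · intro s hs
      obtain ⟨hsub, hsne⟩ := Finset.mem_filter.mp hs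
      rw [Finset.mem_powerset] at hsub
      rw [Finset.mem_sigma]
      constructor
      · exact hsub (Finset.max'_mem _ (hne s hs))
      · rw [Finset.mem_powerset]
        intro x hx
        obtain ⟨hxne, hxs⟩ := Finset.mem_erase.mp hx
        have hx0 := (Finset.mem_Ioo.mp (hsub hxs)).1
        exact Finset.mem_Ioo.mpr ⟨hx0, lt_of_le_of_ne (Finset.le_max' _ _ hxs) hxne⟩
    · intro p hp
      obtain ⟨hk, ht⟩ := Finset.mem_sigma.mp hp
      rw [Finset.mem_powerset] at ht
      obtain ⟨hk0, hkn⟩ := Finset.mem_Ioo.mp hk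
      rw [Finset.mem_filter, Finset.mem_powerset]
      refine ⟨Finset.insert_subset hk (ht.trans (Finset.Ioo_subset_Ioo_right hkn.le)), ?_⟩
      simp
    · intro s hs
      exact Finset.insert_erase (Finset.max'_mem _ (hne s hs))
    · intro p hp
      obtain ⟨hk, ht⟩ := Finset.mem_sigma.mp hp
      rw [Finset.mem_powerset] at ht
      have hknott : p.1 ∉ p.2 := fun h => lt_irrefl _ (Finset.mem_Ioo.mp (ht h)).2
      have hmax : (insert p.1 p.2).max' (Finset.insert_nonempty _ _) = p.1 := by
        apply le_antisymm
        · apply Finset.max'_le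
          intro y hy
          rcases Finset.mem_insert.mp hy with rfl | hy
          · exact le_refl _
          · exact (Finset.mem_Ioo.mp (ht hy)).2.le
        · exact Finset.le_max' _ _ (Finset.mem_insert_self _ _)
      obtain ⟨k, t⟩ := p
      dsimp only at hmax hknott ht ⊢
      refine Sigma.ext hmax (heq_of_eq ?_)
      dsimp only
      rw [hmax]
      exact Finset.erase_insert hknott
    · intro s hs
      exact congrArg F (Finset.insert_erase (Finset.max'_mem _ (hne s hs))).symm

/-- Cary's non-recursive formula: if `U₀ = 1` and
`Uₙ = (1/n) Σ_{k=0}^{n−1} U_k L_{G_{n−k−1}}` for `n ≥ 1`, then `Uₙ` equals the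
sum over all strictly decreasing integer sequences `n > m₁ > ⋯ > m_r > 0`
(including the empty one), identified with subsets of `(0, n)` sorted in
decreasing order, of the products
`(L_{G_{m_r−1}}/m_r) ⋯ (L_{G_{m₁−m₂−1}}/m₁) (L_{G_{n−m₁−1}}/n)`. -/
theorem cary_formula
    {R : Type*} [Ring R] [Algebra ℚ R]
    (U L : ℕ → R)
    (hU0 : U 0 = 1)
    (hU : ∀ n : ℕ, 1 ≤ n → U n = (n : ℚ)⁻¹ • ∑ k ∈ range n, U k * L (n - k - 1)) :
    ∀ n : ℕ, 1 ≤ n →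
      U n = ∑ s ∈ (Finset.Ioo 0 n).powerset, caryTerm L n (s.sort (· ≥ ·)) := by
  intro n
  induction n using Nat.strong_induction_on with
  | _ n ih =>
    intro hn
    have h0n : 0 < n := hn
    rw [hU n hn, powerset_Ioo_sum]
    have hr : Finset.range n = insert 0 (Ioo 0 n) := by
      rw [Finset.range_eq_Ico, Finset.Ioo_insert_left h0n]
    rw [hr, Finset.sum_insert (by simp), hU0, one_mul, smul_add, Finset.smul_sum]
    congr 1
    · simp [caryTerm]
    · apply Finset.sum_congr rfl
      intro k hk
      obtain ⟨hk0, hkn⟩ := Finset.mem_Ioo.mp hk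
      rw [← mul_smul_comm, ih k hkn hk0, Finset.sum_mul]
      apply Finset.sum_congr rfl
      intro t ht
      rw [Finset.mem_powerset] at ht
      have hknott : k ∉ t := fun h => lt_irrefl _ (Finset.mem_Ioo.mp (ht h)).2
      rw [Finset.sort_insert (· ≥ ·) (fun b hb => (Finset.mem_Ioo.mp (ht hb)).2.le) hknott]
      rfl
end

section
/- Let G₁ = S_H H' + P_H F₁ and G₂ = S_H H' + P_H F₂ be two generators differing by a secular term, with U₁, U₂ the corresponding Lie–Deprit transforms (dU_i/dα = U_i L_{G_i}, U_i(0)=1). Then the connecting transform U₂₁ = U₂ U₁⁻¹ satisfies dU₂₁/dα = U₂₁ L_{W} with generator W = U₁ P_H (F₂ − F₁); moreover, using the intertwining U₁ P_H = P₀ U₁, the generator W = P₀ U₁ (F₂ − F₁) is secular (fixed by composing with P₀ in the sense P₀ W = W). -/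
/-- Two normalising generators `G₁ = S_H H' + P_H F₁` and `G₂ = S_H H' + P_H F₂`
differing by their uniqueness conditions yield Lie–Deprit transforms `U₁`, `U₂`
(with `V₁ = U₁⁻¹`) whose connecting transform `U₂₁ = U₂ V₁` satisfies
`dU₂₁/dα = U₂₁ L_W` with generator `W = U₁ P_H (F₂ − F₁)`; moreover, by the
intertwining `U₁ P_H = P₀ U₁`, the generator `W` is secular: `P₀ W = W`. -/
theorem connecting_transform_secular_generator
    {A : Type*} [NormedAddCommGroup A] [NormedSpace ℝ A]
    (ℒ : A →ₗ[ℝ] (A →L[ℝ] A))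
    (P₀ : A →L[ℝ] A) (hP₀ : P₀ ∘L P₀ = P₀)
    (SH PH U₁ V₁ U₂ : ℝ → (A →L[ℝ] A))
    (H' F₁ F₂ G₁ G₂ : ℝ → A)
    (hPHproj : ∀ α : ℝ, PH α ∘L PH α = PH α)
    (hG₁ : ∀ α : ℝ, G₁ α = SH α (H' α) + PH α (F₁ α))
    (hG₂ : ∀ α : ℝ, G₂ α = SH α (H' α) + PH α (F₂ α))
    (hU₂ : ∀ α : ℝ, HasDerivAt U₂ (U₂ α ∘L ℒ (G₂ α)) α)
    (hV₁ : ∀ α : ℝ, HasDerivAt V₁ (-(ℒ (G₁ α) ∘L V₁ α)) α)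
    (hinv : ∀ α : ℝ, U₁ α ∘L V₁ α = 1 ∧ V₁ α ∘L U₁ α = 1)
    (hcanon : ∀ (F : A) (α : ℝ), ℒ F ∘L V₁ α = V₁ α ∘L ℒ (U₁ α F))
    (hintertwine : ∀ α : ℝ, U₁ α ∘L PH α = P₀ ∘L U₁ α) :
    (∀ α : ℝ, HasDerivAt (fun β => U₂ β ∘L V₁ β)
        ((U₂ α ∘L V₁ α) ∘L ℒ (U₁ α (PH α (F₂ α - F₁ α)))) α) ∧
    (∀ α : ℝ, P₀ (U₁ α (PH α (F₂ α - F₁ α))) = U₁ α (PH α (F₂ α - F₁ α))) := by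
  constructor
  · intro α
    have h := (hU₂ α).clm_comp (hV₁ α)
    have hsub : G₂ α - G₁ α = PH α (F₂ α - F₁ α) := by
      rw [hG₁, hG₂, map_sub]; abel
    have hL : ℒ (PH α (F₂ α - F₁ α)) = ℒ (G₂ α) - ℒ (G₁ α) := by
      rw [← hsub, map_sub]
    have key : (U₂ α ∘L V₁ α) ∘L ℒ (U₁ α (PH α (F₂ α - F₁ α)))
        = (U₂ α ∘L ℒ (G₂ α)) ∘L V₁ α + U₂ α ∘L (-(ℒ (G₁ α) ∘L V₁ α)) := by
      rw [ContinuousLinearMap.comp_assoc, ← hcanon, hL,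
        ContinuousLinearMap.sub_comp, ContinuousLinearMap.comp_sub,
        ContinuousLinearMap.comp_neg, sub_eq_add_neg,
        ← ContinuousLinearMap.comp_assoc]
    rw [key]
    exact h
  · intro α
    have h1 : P₀ (U₁ α (PH α (F₂ α - F₁ α)))
        = (P₀ ∘L U₁ α) (PH α (F₂ α - F₁ α)) := rfl
    rw [h1, ← hintertwine α]
    show U₁ α (PH α (PH α (F₂ α - F₁ α))) = _
    rw [← ContinuousLinearMap.comp_apply (PH α) (PH α), hPHproj α]
end

section
/- In the non-recursive triangular algorithm for the direct Lie–Deprit transform: define f_k^{(N)} = Σ_{j=k}^N α^j H_{j−k} for 0 ≤ k ≤ N and recursively f_k^{(n)} = f_k^{(n+1)} + (1/(n+1)) L_{G_{n−k}} f_{n+1}^{(n+1)} for k = 0,…,n, n = N−1,…,0. Then Σ_{k=0}^{n} U_k f_k^{(n)} is independent of n (for 0 ≤ n ≤ N, modulo α^{N+1}), where U_k satisfy U₀ = 1 and U_n = (1/n) Σ_{k=0}^{n−1} U_k L_{G_{n−k−1}}; consequently f_0^{(0)} = Σ_{k=0}^N U_k f_k^{(N)} = (Σ_{n=0}^N α^n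 U_n)(Σ_{n=0}^N α^n H_n) mod α^{N+1}. -/
open Finset

/-- Coefficients (in `α`) of the ancillary functions of the triangular
algorithm.  `triCoeff N H L i k j` is the coefficient of `α^j` in `f_k^{(N−i)}`:
the top row is `f_k^{(N)} = Σ_{j=k}^N α^j H_{j−k}`, and the recursion
`f_k^{(n)} = f_k^{(n+1)} + (1/(n+1)) L_{G_{n−k}} f_{n+1}^{(n+1)}` (with
`n + 1 = N − i`) descends the triangle. -/
def triCoeff {M : Type*} [AddCommGroup M] [Module ℚ M]
    (N : ℕ) (H : ℕ → M) (L : ℕ → Module.End ℚ M) : ℕ → ℕ → ℕ → M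
  | 0 => fun k j => if k ≤ j ∧ j ≤ N ∧ k ≤ N then H (j - k) else 0
  | (i + 1) => fun k j =>
      triCoeff N H L i k j
        + ((N - i : ℕ) : ℚ)⁻¹ • (L (N - i - 1 - k)) (triCoeff N H L i (N - i) j)

/-- Correctness of the non-recursive triangular algorithm for the direct
Lie–Deprit transform: with `f_k^{(N)} = Σ_{j=k}^N α^j H_{j−k}`, the downward
recursion `f_k^{(n)} = f_k^{(n+1)} + (1/(n+1)) L_{G_{n−k}} f_{n+1}^{(n+1)}`, and
the Deprit coefficients `U₀ = 1`, `Uₙ = (1/n) Σ_{k=0}^{n−1} U_k L_{G_{n−k−1}}`,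
the sums `Σ_{k=0}^n U_k f_k^{(n)}` are independent of `n` (modulo `α^{N+1}`),
and consequently `f_0^{(0)} = (Σ αⁿ Uₙ)(Σ αⁿ Hₙ) mod α^{N+1}`, i.e. the `j`-th
coefficient of `f_0^{(0)}` is `Σ_{k=0}^j U_k H_{j−k}` for `j ≤ N`. -/
theorem triangular_algorithm_correct
    {M : Type*} [AddCommGroup M] [Module ℚ M]
    (N : ℕ) (H : ℕ → M) (L : ℕ → Module.End ℚ M)
    (U : ℕ → Module.End ℚ M)
    (hU0 : U 0 = 1)
    (hU : ∀ n : ℕ, 1 ≤ n →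
      U n = (n : ℚ)⁻¹ • ∑ k ∈ range n, U k ∘ₗ L (n - k - 1)) :
    (∀ n : ℕ, n ≤ N → ∀ j : ℕ, j ≤ N →
      ∑ k ∈ range (n + 1), (U k) (triCoeff N H L (N - n) k j)
        = ∑ k ∈ range (N + 1), (U k) (triCoeff N H L 0 k j)) ∧
    (∀ j : ℕ, j ≤ N →
      triCoeff N H L N 0 j = ∑ k ∈ range (j + 1), (U k) (H (j - k))) := by

  have key : ∀ n, n < N → ∀ j : ℕ,
      ∑ k ∈ range (n + 1), (U k) (triCoeff N H L (N - n) k j)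
        = ∑ k ∈ range (n + 1 + 1), (U k) (triCoeff N H L (N - (n + 1)) k j) := by
    intro n hn j
    set i := N - (n + 1) with hidef
    have hi : N - n = i + 1 := by omega
    have hNi : N - i = n + 1 := by omega
    have hunfold : ∀ k, triCoeff N H L (i + 1) k j
        = triCoeff N H L i k j
          + ((n + 1 : ℕ) : ℚ)⁻¹ • (L (n - k)) (triCoeff N H L i (n + 1) j) := by
      intro k
      show triCoeff N H L i k j
          + ((N - i : ℕ) : ℚ)⁻¹ • (L (N - i - 1 - k)) (triCoeff N H L i (N - i) j) = _
      rw [hNi, show n + 1 - 1 - k = n - k from by omega]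
    rw [hi]
    calc ∑ k ∈ range (n + 1), (U k) (triCoeff N H L (i + 1) k j)
        = ∑ k ∈ range (n + 1), ((U k) (triCoeff N H L i k j)
            + ((n + 1 : ℕ) : ℚ)⁻¹ • (U k) ((L (n - k)) (triCoeff N H L i (n + 1) j))) := by
          refine Finset.sum_congr rfl fun k _ => ?_
          rw [hunfold k, map_add, map_smul]
      _ = ∑ k ∈ range (n + 1), (U k) (triCoeff N H L i k j)
            + (U (n + 1)) (triCoeff N H L i (n + 1) j) := by
          rw [Finset.sum_add_distrib]
          congr 1
          rw [hU (n + 1) (by omega)]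
          simp only [LinearMap.smul_apply, LinearMap.sum_apply, LinearMap.comp_apply,
            Finset.smul_sum, show ∀ k, n + 1 - k - 1 = n - k from fun k => by omega]
      _ = ∑ k ∈ range (n + 1 + 1), (U k) (triCoeff N H L i k j) :=
          (Finset.sum_range_succ _ _).symm
  have inv : ∀ n, n ≤ N → ∀ j : ℕ,
      ∑ k ∈ range (n + 1), (U k) (triCoeff N H L (N - n) k j)
        = ∑ k ∈ range (N + 1), (U k) (triCoeff N H L 0 k j) := by
    intro n hn j
    have step : ∀ m, n ≤ m → m ≤ N →
        ∑ k ∈ range (n + 1), (U k) (triCoeff N H L (N - n) k j)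
          = ∑ k ∈ range (m + 1), (U k) (triCoeff N H L (N - m) k j) := by
      intro m
      induction m with
      | zero =>
        intro h1 _
        obtain rfl : n = 0 := Nat.le_zero.mp h1
        rfl
      | succ m ih =>
        intro h1 h2
        rcases Nat.lt_or_ge n (m + 1) with h | h
        · rw [ih (by omega) (by omega), key m (by omega) j]
        · obtain rfl : n = m + 1 := by omega
          rfl
    have := step N hn le_rfl
    rwa [Nat.sub_self] at this
  constructor
  · intro n hn j _
    exact inv n hn j
  · intro j hj
    have h0 := inv 0 (Nat.zero_le N) j
    rw [Nat.sub_zero, Finset.sum_range_one, hU0, Module.End.one_apply] at h0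
    rw [h0]
    rw [← Finset.sum_subset (Finset.range_subset_range.mpr (by omega : j + 1 ≤ N + 1))
      (fun k hk hk' => ?_)]
    · refine Finset.sum_congr rfl fun k hk => ?_
      simp only [Finset.mem_range] at hk
      congr 1
      show (if k ≤ j ∧ j ≤ N ∧ k ≤ N then H (j - k) else 0) = H (j - k)
      rw [if_pos ⟨by omega, hj, by omega⟩]
    · simp only [Finset.mem_range] at hk hk'
      have : triCoeff N H L 0 k j = 0 := by
        show (if k ≤ j ∧ j ≤ N ∧ k ≤ N then H (j - k) else 0) = 0
        rw [if_neg (by omega)]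
      rw [this, map_zero]
end
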